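/- Let A ~ Binom(N, 1-q), B ~ Binom(N, 1/2), C ~ Binom(N, 1-q) be mutually independent and define G(q) = -h(1-q)^N + (1-h)·Σ_{k=0}^{N} P(A=k)·(P(B<k) + (1/2)P(B=k) - 2^{-N}(P(C>k) + (1/2)P(C=k))). Then G'(0) = hN - (1-h)·N(N+1)·2^{-(N+1)}. In particular G'(0) > 0 if and only if h > (N+1)/(2^{N+1}+N+1). -/

import Mathlib

/-- The probability mass function of a binomial random variable with `n` trials
and success probability `p`, evaluated at `k`. -/
noncomputable def binomPMF (n : ℕ) (p : ℝ) (k : ℕ) : ℝ :=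
  (n.choose k : ℝ) * p ^ k * (1 - p) ^ (n - k)

/-- The principal's expected payoff in the model with a general red herring:
A, C ~ Binom(N,1-q), B ~ Binom(N,1/2) independent, and
G(q) = -h(1-q)^N + (1-h) Σ_k P(A=k)(P(B<k) + (1/2)P(B=k)
  - 2^{-N}(P(C>k) + (1/2)P(C=k))). -/
noncomputable def G (N : ℕ) (h q : ℝ) : ℝ :=
  -h * (1-q) ^ N
    + (1-h) * ∑ k ∈ Finset.range (N+1), binomPMF N (1-q) k *
        ((∑ j ∈ Finset.range k, binomPMF N (1/2) j) + (1/2) * binomPMF N (1/2) k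
          - ((2:ℝ)^(N:ℕ))⁻¹ * ((∑ j ∈ Finset.Ioc k N, binomPMF N (1-q) j)
              + (1/2) * binomPMF N (1-q) k))

/-- derivative (w.r.t. q, at q = 0) of `q ↦ binomPMF N (1-q) k`. -/
noncomputable def dcoef (N k : ℕ) : ℝ :=
  (N.choose k : ℝ) * (if N - k = 0 then -(k:ℝ) else if N - k = 1 then 1 else 0)

lemma aux_hasDerivAt (k m : ℕ) (C : ℝ) :
    HasDerivAt (fun q : ℝ => C * (1-q)^k * (1-(1-q))^m)
      (C * (if m = 0 then -(k:ℝ) else if m = 1 then 1 else 0)) 0 := by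
  have h1 : HasDerivAt (fun q:ℝ => 1 - q) (-1) 0 := by
    simpa using (hasDerivAt_id (0:ℝ)).const_sub 1
  have h2 := (h1.fun_pow k).const_mul C
  have h3 := (h1.const_sub 1).fun_pow m
  have h4 := h2.fun_mul h3
  refine h4.congr_deriv (Eq.symm ?_)
  norm_num
  match m with
  | 0 => norm_num
  | 1 => norm_num
  | (m+2) => simp [pow_succ]

lemma hf_deriv (N k : ℕ) :
    HasDerivAt (fun q : ℝ => binomPMF N (1-q) k) (dcoef N k) 0 := by
  simpa only [binomPMF, dcoef] using aux_hasDerivAt k (N-k) (N.choose k : ℝ)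

/-- per-`k` derivative of the summand of `G` at `q = 0`. -/
noncomputable def Dterm (N k : ℕ) : ℝ :=
  dcoef N k * ((∑ j ∈ Finset.range k, binomPMF N (1/2) j) + (1/2) * binomPMF N (1/2) k
      - ((2:ℝ)^N)⁻¹ * ((∑ j ∈ Finset.Ioc k N, binomPMF N 1 j) + (1/2) * binomPMF N 1 k))
    + binomPMF N 1 k * (-(((2:ℝ)^N)⁻¹ * ((∑ j ∈ Finset.Ioc k N, dcoef N j) + (1/2) * dcoef N k)))

lemma Ioc_succ_singleton (n : ℕ) : Finset.Ioc n (n+1) = {n+1} := by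
  ext x; simp [Finset.mem_Ioc]

lemma sumD (m : ℕ) : ∑ k ∈ Finset.range (m+2+1), Dterm (m+2) k
    = -(((m:ℝ)+2)*((m:ℝ)+3)) * ((2:ℝ)^(m+3))⁻¹ := by
  rw [Finset.sum_range_succ, Finset.sum_range_succ]
  have hzero : ∑ k ∈ Finset.range (m+1), Dterm (m+2) k = 0 := by
    refine Finset.sum_eq_zero fun k hk => ?_
    simp only [Finset.mem_range] at hk
    have h1 : binomPMF (m+2) 1 k = 0 := by
      unfold binomPMF
      rw [show (1:ℝ)-1 = 0 by ring, zero_pow (by omega : m+2-k ≠ 0), mul_zero]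
    have h2 : dcoef (m+2) k = 0 := by
      unfold dcoef
      rw [if_neg (by omega), if_neg (by omega), mul_zero]
    simp [Dterm, h1, h2]
  rw [hzero, zero_add]
  have e1 : binomPMF (m+2) 1 (m+1) = 0 := by
    simp [binomPMF, show m+2-(m+1) = 1 by omega]
  have e2 : binomPMF (m+2) 1 (m+2) = 1 := by
    simp [binomPMF]
  have d1 : dcoef (m+2) (m+1) = (m:ℝ)+2 := by
    unfold dcoef
    rw [if_neg (by omega), if_pos (by omega), Nat.choose_succ_self_right]
    push_cast; ring
  have d2 : dcoef (m+2) (m+2) = -((m:ℝ)+2) := by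
    unfold dcoef
    rw [if_pos (by omega), Nat.choose_self]
    push_cast; ring
  have b1 : binomPMF (m+2) (1/2) (m+1) = ((m:ℝ)+2) * ((2:ℝ)^(m+2))⁻¹ := by
    unfold binomPMF
    rw [Nat.choose_succ_self_right, show m+2-(m+1) = 1 by omega]
    push_cast
    rw [show ((1:ℝ) - 1/2) = 1/2 by norm_num, show (2:ℝ)^(m+2) = 2^(m+1) * 2 by rw [pow_succ]]
    rw [mul_inv, show ((1:ℝ)/2) = (2:ℝ)⁻¹ by norm_num, ← inv_pow]
    ring
  have b2 : binomPMF (m+2) (1/2) (m+2) = ((2:ℝ)^(m+2))⁻¹ := by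
    unfold binomPMF
    rw [Nat.choose_self, Nat.sub_self]
    rw [show ((1:ℝ)/2) = (2:ℝ)⁻¹ by norm_num]
    rw [← inv_pow]
    norm_num
  have hIoc1 : Finset.Ioc (m+1) (m+2) = {m+2} := Ioc_succ_singleton (m+1)
  have hIoc2 : Finset.Ioc (m+2) (m+2) = (∅ : Finset ℕ) := Finset.Ioc_self _
  simp only [Dterm, hIoc1, hIoc2, Finset.sum_singleton, Finset.sum_empty,
    Finset.sum_range_succ, e1, e2, d1, d2, b1, b2]
  have hx : ((2:ℝ)^(m+1)) ≠ 0 := by positivity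
  rw [show (2:ℝ)^(m+2) = 2 * 2^(m+1) by rw [pow_succ]; ring,
      show (2:ℝ)^(m+3) = 4 * 2^(m+1) by rw [pow_succ, pow_succ]; ring]
  field_simp
  ring

lemma G_hasDerivAt' (N : ℕ) (h : ℝ) :
    HasDerivAt (G N h)
      (h * N + (1-h) * ∑ k ∈ Finset.range (N+1), Dterm N k) 0 := by
  have h1 : HasDerivAt (fun q:ℝ => 1 - q) (-1) 0 := by
    simpa using (hasDerivAt_id (0:ℝ)).const_sub 1
  have hterm : ∀ k, HasDerivAt (fun q : ℝ => binomPMF N (1-q) k *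
      ((∑ j ∈ Finset.range k, binomPMF N (1/2) j) + (1/2) * binomPMF N (1/2) k
        - ((2:ℝ)^(N:ℕ))⁻¹ * ((∑ j ∈ Finset.Ioc k N, binomPMF N (1-q) j)
            + (1/2) * binomPMF N (1-q) k))) (Dterm N k) 0 := by
    intro k
    have hin : HasDerivAt (fun q : ℝ =>
        (∑ j ∈ Finset.range k, binomPMF N (1/2) j) + (1/2) * binomPMF N (1/2) k
          - ((2:ℝ)^(N:ℕ))⁻¹ * ((∑ j ∈ Finset.Ioc k N, binomPMF N (1-q) j)
              + (1/2) * binomPMF N (1-q) k))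
        (-(((2:ℝ)^N)⁻¹ * ((∑ j ∈ Finset.Ioc k N, dcoef N j) + (1/2) * dcoef N k))) 0 :=
      HasDerivAt.const_sub _
        ((((HasDerivAt.fun_sum (fun j _ => hf_deriv N j)).fun_add
          ((hf_deriv N k).const_mul (1/2))).const_mul (((2:ℝ)^(N:ℕ))⁻¹)))
    have := (hf_deriv N k).fun_mul hin
    refine this.congr_deriv (Eq.symm ?_)
    unfold Dterm
    norm_num
  have Hsum := HasDerivAt.fun_sum (fun k (_ : k ∈ Finset.range (N+1)) => hterm k)
  have H1 := (h1.fun_pow N).const_mul (-h)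
  have HG := H1.fun_add (Hsum.const_mul (1-h))
  have hGeq : G N h = fun q : ℝ => -h * (1-q)^N
    + (1-h) * ∑ k ∈ Finset.range (N+1), binomPMF N (1-q) k *
        ((∑ j ∈ Finset.range k, binomPMF N (1/2) j) + (1/2) * binomPMF N (1/2) k
          - ((2:ℝ)^(N:ℕ))⁻¹ * ((∑ j ∈ Finset.Ioc k N, binomPMF N (1-q) j)
              + (1/2) * binomPMF N (1-q) k)) := rfl
  rw [hGeq]
  refine HG.congr_deriv (Eq.symm ?_)
  norm_num

/-- G'(0) = hN - (1-h)N(N+1)2^{-(N+1)}, and G'(0) > 0 iff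
h > (N+1)/(2^{N+1}+N+1). -/
theorem stmt_12 (N : ℕ) (hN : 2 ≤ N) (h : ℝ) (hh : h ∈ Set.Ioo (0:ℝ) 1) :
    HasDerivAt (G N h)
      (h * N - (1-h) * N * (N+1) * ((2:ℝ)^(N+1))⁻¹) 0 ∧
    (0 < h * N - (1-h) * N * (N+1) * ((2:ℝ)^(N+1))⁻¹
      ↔ (N+1) / ((2:ℝ)^(N+1) + N + 1) < h) := by
  obtain ⟨m, rfl⟩ : ∃ m, N = m + 2 := ⟨N - 2, by omega⟩
  obtain ⟨h0, h1'⟩ := hh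
  constructor
  · have H := G_hasDerivAt' (m+2) h
    rw [sumD m] at H
    convert H using 1
    push_cast
    rw [show m+2+1 = m+3 from rfl]
    ring
  · have hP : (0:ℝ) < 2^(m+2+1) := by positivity
    have hn : (0:ℝ) < ((m:ℝ)+2) := by positivity
    push_cast
    rw [sub_pos, ← div_eq_mul_inv, div_lt_iff₀ hP, div_lt_iff₀ (by positivity)]
    constructor <;> intro H <;> nlinarith [hP, hn, h0, h1', mul_pos h0 hP]
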